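/- Suppose 1 ≤ s(σ) < α ≤ β < r, q ≥ β(Δ(σ)-1) + 1 and n ≥ 2s(σ) - 1. Then H(n,r,q|σ) is not (α,β)-colourable: every vertex-colouring contains an edge with fewer than α or more than β distinct colours. -/

import Mathlib

open Finset

/-- `K` is an edge of the σ-hypergraph `H(n,r,q | σ)`: the multiset of non-zero
cardinalities of the intersections of `K` with the `n` classes equals `σ`. -/
def sigmaEdge (n q : ℕ) (σ : Multiset ℕ) (K : Finset (Fin n × Fin q)) : Prop :=
  (((Finset.univ : Finset (Fin n)).val.map
      fun i => (K.filter fun v => v.1 = i).card).filter fun m => m ≠ 0) = σ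

/-- `c` is an `(α,β)`-colouring: every edge contains at least `α` and at most `β` colours. -/
def isABColouring (n q : ℕ) (σ : Multiset ℕ) (α β : ℕ) (c : Fin n × Fin q → ℕ) : Prop :=
  ∀ K : Finset (Fin n × Fin q), sigmaEdge n q σ K →
    α ≤ (K.image c).card ∧ (K.image c).card ≤ β

/-- `c` uses exactly `k` colours. -/
def usesExactly (n q k : ℕ) (c : Fin n × Fin q → ℕ) : Prop :=
  ((Finset.univ : Finset (Fin n × Fin q)).image c).card = k

/-- every class of the σ-hypergraph is monochromatic under `c`. -/
def classesMonochromatic (n q : ℕ) (c : Fin n × Fin q → ℕ) : Prop :=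
  ∀ v w : Fin n × Fin q, v.1 = w.1 → c v = c w

/-- `σ` is a partition of `r` (a multiset of positive integers summing to `r`). -/
def IsPartitionOf (σ : Multiset ℕ) (r : ℕ) : Prop := σ.sum = r ∧ 0 ∉ σ

/-- A set whose class-intersection sizes are given by a list `L`
placed injectively, and zero elsewhere, is a `σ`-edge for `σ = ↑L`. -/
lemma sigmaEdge_of_cards {n q : ℕ} (σ : Multiset ℕ) (K : Finset (Fin n × Fin q))
    (L : List ℕ) (hLσ : (L : Multiset ℕ) = σ) (h0 : ∀ a ∈ L, a ≠ 0)
    (g : Fin L.length → Fin n) (hg : Function.Injective g)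
    (hcard : ∀ j, ((K.filter fun v => v.1 = g j).card) = L.get j)
    (hZ : ∀ i : Fin n, (∀ j, g j ≠ i) → (K.filter fun v => v.1 = i).card = 0) :
    sigmaEdge n q σ K := by
  unfold sigmaEdge
  set f : Fin n → ℕ := fun i => (K.filter fun v => v.1 = i).card with hf
  have key : (univ : Finset (Fin n)).filter (fun i => f i ≠ 0) = univ.image g := by
    ext i
    simp only [mem_filter, mem_univ, true_and, mem_image]
    constructor
    · intro h
      by_contra hcon
      push_neg at hcon
      exact h (hZ i hcon)
    · rintro ⟨j, -, rfl⟩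
      rw [hf]
      simp only []
      rw [hcard j]
      exact h0 _ (by have := List.get_mem L j; simpa using this)
  have step1 : ((univ : Finset (Fin n)).val.map f).filter (fun m => m ≠ 0)
      = ((univ.filter fun i => f i ≠ 0).val).map f := by
    rw [Finset.filter_val, Multiset.filter_map]
    rfl
  rw [step1, key]
  have himg : (univ.image g) = univ.map ⟨g, hg⟩ := (Finset.map_eq_image ⟨g, hg⟩ univ).symm
  have hval : (univ.image g).val = (univ : Finset (Fin L.length)).val.map g := by
    rw [himg, Finset.map_val]; rfl
  rw [hval, Multiset.map_map, Fin.univ_val_map]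
  have : (List.ofFn (f ∘ g)) = L := by
    have hfg : f ∘ g = L.get := funext fun j => hcard j
    rw [hfg, List.ofFn_get]
  rw [this, hLσ]

lemma filter_biUnion_eq {n q m : ℕ} (g : Fin m → Fin n) (hg : Function.Injective g)
    (T : Fin m → Finset (Fin q)) (j₀ : Fin m) :
    ((univ.biUnion fun j => (T j).image fun x => ((g j, x) : Fin n × Fin q)).filter
      fun v => v.1 = g j₀) = (T j₀).image fun x => (g j₀, x) := by
  ext v
  simp only [mem_filter, mem_biUnion, mem_univ, true_and, mem_image]
  constructor
  · rintro ⟨⟨j, x, hx, rfl⟩, h1⟩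
    simp only at h1
    cases hg h1
    exact ⟨x, hx, rfl⟩
  · rintro ⟨x, hx, rfl⟩
    exact ⟨⟨j₀, x, hx, rfl⟩, rfl⟩

lemma filter_biUnion_empty {n q m : ℕ} (g : Fin m → Fin n)
    (T : Fin m → Finset (Fin q)) (i : Fin n) (hi : ∀ j, g j ≠ i) :
    ((univ.biUnion fun j => (T j).image fun x => ((g j, x) : Fin n × Fin q)).filter
      fun v => v.1 = i) = ∅ := by
  ext v
  simp only [mem_filter, mem_biUnion, mem_univ, true_and, mem_image, notMem_empty, iff_false]
  rintro ⟨⟨j, x, hx, rfl⟩, h1⟩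
  exact hi j h1

/-- Greedy construction of a colourful edge through classes carrying many colours. -/
lemma greedy {n q β : ℕ} (c : Fin n × Fin q → ℕ) :
    ∀ P : List (Fin n × ℕ), (P.map Prod.fst).Nodup →
    (∀ p ∈ P, β + 1 ≤ ((univ : Finset (Fin q)).image fun x => c (p.1, x)).card) →
    (∀ p ∈ P, p.2 ≤ q) →
    ∃ K : Finset (Fin n × Fin q),
      (∀ v ∈ K, v.1 ∈ P.map Prod.fst) ∧
      (∀ i a, (i, a) ∈ P → (K.filter fun v => v.1 = i).card = a) ∧
      min (β + 1) (P.map Prod.snd).sum ≤ (K.image c).card := by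
  intro P
  induction P with
  | nil =>
    intro _ _ _
    exact ⟨∅, by simp, by simp, by simp⟩
  | cons p P ih =>
    obtain ⟨i, a⟩ := p
    intro hnd hcol hq
    have hnd' : (i :: P.map Prod.fst).Nodup := by simpa using hnd
    have hiP : i ∉ P.map Prod.fst := (List.nodup_cons.mp hnd').1
    obtain ⟨K₀, hsupp, hcards, hcolbd⟩ :=
      ih (List.nodup_cons.mp hnd').2 (fun p hp => hcol p (List.mem_cons_of_mem _ hp))
        (fun p hp => hq p (List.mem_cons_of_mem _ hp))
    set ci : Fin q → ℕ := fun x => c (i, x) with hci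
    set D : Finset ℕ := univ.image ci with hD
    have hDcard : β + 1 ≤ D.card := hcol (i, a) (List.mem_cons_self)
    set C : Finset ℕ := K₀.image c with hC
    set t : ℕ := C.card with ht
    set k : ℕ := min a (β + 1 - t) with hk
    have hkle : k ≤ (D \ C).card := by
      have h1 := Finset.le_card_sdiff C D
      omega
    obtain ⟨F, hFsub, hFcard⟩ := Finset.exists_subset_card_eq hkle
    have hqpos : 0 < q := by
      by_contra hq0
      have : D = ∅ := by
        rw [hD]
        have : (univ : Finset (Fin q)) = ∅ := by
          apply Finset.eq_empty_of_forall_notMem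
          intro x; exact absurd x.2 (by omega)
        rw [this]; simp
      rw [this] at hDcard; simp at hDcard
    have : Nonempty (Fin q) := ⟨⟨0, hqpos⟩⟩
    have hFD : ∀ col ∈ F, ∃ x : Fin q, ci x = col := by
      intro col hcol'
      have : col ∈ D := (Finset.sdiff_subset) (hFsub hcol')
      simpa [hD, Finset.mem_image] using this
    choose! φ hφ using hFD
    set S₀ : Finset (Fin q) := F.image φ with hS₀
    have hS₀img : S₀.image ci = F := by
      rw [hS₀, Finset.image_image]
      exact (Finset.image_congr (fun col hcol' => hφ col hcol')).trans Finset.image_id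
    have hS₀card : S₀.card ≤ a :=
      le_trans Finset.card_image_le (le_trans (le_of_eq hFcard) (min_le_left _ _))
    obtain ⟨S, hS₀S, hScard⟩ :=
      Finset.exists_superset_card_eq hS₀card
        (by simpa using hq (i, a) (List.mem_cons_self))
    have hinj : Function.Injective (fun x : Fin q => ((i, x) : Fin n × Fin q)) := by
      intro x y hxy; simpa using congrArg Prod.snd hxy
    refine ⟨K₀ ∪ S.image (fun x => (i, x)), ?_, ?_, ?_⟩
    · intro v hv
      rcases Finset.mem_union.mp hv with h | h
      · exact List.mem_cons_of_mem _ (hsupp v h)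
      · obtain ⟨x, -, rfl⟩ := Finset.mem_image.mp h
        exact List.mem_cons_self
    · intro i' a' hmem
      rcases List.mem_cons.mp hmem with h | h
      · cases h
        have hfilt : ((K₀ ∪ S.image fun x => (i, x)).filter fun v => v.1 = i)
            = S.image (fun x => (i, x)) := by
          rw [Finset.filter_union]
          have h1 : K₀.filter (fun v : Fin n × Fin q => v.1 = i) = ∅ := by
            rw [Finset.filter_eq_empty_iff]
            intro v hv hvi
            exact hiP (hvi ▸ hsupp v hv)
          have h2 : (S.image fun x => ((i, x) : Fin n × Fin q)).filter (fun v => v.1 = i)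
              = S.image fun x => (i, x) := by
            apply Finset.filter_true_of_mem
            rintro v hv
            obtain ⟨x, -, rfl⟩ := Finset.mem_image.mp hv
            rfl
          rw [h1, h2, Finset.empty_union]
        rw [hfilt, Finset.card_image_of_injective _ hinj]
        exact hScard
      · have hii' : i' ≠ i := by
          intro he
          exact hiP (he ▸ List.mem_map_of_mem (f := Prod.fst) h)
        rw [Finset.filter_union]
        have h2 : (S.image fun x => ((i, x) : Fin n × Fin q)).filter (fun v => v.1 = i') = ∅ := by
          rw [Finset.filter_eq_empty_iff]
          intro v hv
          obtain ⟨x, -, rfl⟩ := Finset.mem_image.mp hv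
          simpa using fun he => hii' he.symm
        rw [h2, Finset.union_empty]
        exact hcards i' a' h
    · have hsub : C ∪ F ⊆ (K₀ ∪ S.image fun x => (i, x)).image c := by
        intro col hcol'
        rcases Finset.mem_union.mp hcol' with h | h
        · obtain ⟨v, hv, rfl⟩ := Finset.mem_image.mp h
          exact Finset.mem_image.mpr ⟨v, Finset.mem_union_left _ hv, rfl⟩
        · rw [← hS₀img] at h
          obtain ⟨x, hx, rfl⟩ := Finset.mem_image.mp h
          exact Finset.mem_image.mpr
            ⟨(i, x), Finset.mem_union_right _ (Finset.mem_image.mpr ⟨x, hS₀S hx, rfl⟩), rfl⟩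
      have hdisj : Disjoint C F :=
        (Finset.disjoint_of_subset_left hFsub Finset.sdiff_disjoint).symm
      have hcard2 : t + k ≤ ((K₀ ∪ S.image fun x => (i, x)).image c).card := by
        have hle := Finset.card_le_card hsub
        rw [Finset.card_union_of_disjoint hdisj, hFcard] at hle
        exact hle
      have hsum : ((((i, a) :: P).map Prod.snd).sum) = a + (P.map Prod.snd).sum := by simp
      rw [hsum]
      omega

theorem stmt10 (n r q α β Δ : ℕ) (σ : Multiset ℕ)
    (hpart : IsPartitionOf σ r)
    (hΔmem : Δ ∈ σ) (hΔmax : ∀ x ∈ σ, x ≤ Δ)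
    (hs1 : 1 ≤ σ.card) (hsα : σ.card < α) (hαβ : α ≤ β) (hβr : β < r)
    (hq : β * (Δ - 1) + 1 ≤ q) (hn : 2 * σ.card - 1 ≤ n) :
    ∀ c : Fin n × Fin q → ℕ, ¬ isABColouring n q σ α β c := by
  classical
  intro c hc
  obtain ⟨hsum, h0σ⟩ := hpart
  have hΔpos : 1 ≤ Δ := Nat.one_le_iff_ne_zero.mpr (fun h => h0σ (h ▸ hΔmem))
  have hrs : r ≤ σ.card * Δ := by
    have := Multiset.sum_le_card_nsmul σ Δ hΔmax
    rw [hsum] at this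
    simpa [smul_eq_mul] using this
  have hΔ2 : 2 ≤ Δ := by
    by_contra h
    have h1 : Δ ≤ 1 := by omega
    have : σ.card * Δ ≤ σ.card := by
      calc σ.card * Δ ≤ σ.card * 1 := Nat.mul_le_mul_left _ h1
      _ = σ.card := Nat.mul_one _
    omega
  have hβ2 : 2 ≤ β := by omega
  have hqΔ : Δ ≤ q := by
    have : 2 * (Δ - 1) ≤ β * (Δ - 1) := Nat.mul_le_mul_right _ hβ2
    omega
  set L : List ℕ := σ.toList with hLdef
  have hLs : (L : Multiset ℕ) = σ := σ.coe_toList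
  have hLlen : L.length = σ.card := σ.length_toList
  have hLpos : ∀ a ∈ L, a ≠ 0 := by
    intro a ha h
    apply h0σ
    rw [← hLs]
    exact h ▸ (by exact_mod_cast ha)
  have hLΔ : ∀ j : Fin L.length, L.get j ≤ Δ := by
    intro j
    apply hΔmax
    rw [← hLs]
    exact_mod_cast List.get_mem L j
  -- dichotomy for every class
  have claim2 : ∀ i : Fin n,
      (∃ col, Δ ≤ ((univ : Finset (Fin q)).filter fun x => c (i, x) = col).card) ∨
      β + 1 ≤ ((univ : Finset (Fin q)).image fun x => c (i, x)).card := by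
    intro i
    by_contra h
    push_neg at h
    obtain ⟨h1, h2⟩ := h
    have hfib := Finset.card_eq_sum_card_fiberwise
      (f := fun x : Fin q => c (i, x)) (s := univ)
      (t := univ.image fun x => c (i, x)) (fun x _ => Finset.mem_image_of_mem _ (mem_univ x))
    beta_reduce at hfib
    have hbound : ∑ b ∈ (univ.image fun x : Fin q => c (i, x)),
        ((univ.filter fun x : Fin q => c (i, x) = b).card)
        ≤ ((univ : Finset (Fin q)).image fun x => c (i, x)).card * (Δ - 1) := by
      have := Finset.sum_le_card_nsmul ((univ : Finset (Fin q)).image fun x => c (i, x))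
        (fun b => (univ.filter fun x : Fin q => c (i, x) = b).card) (Δ - 1)
        (fun b _ => by
          show ((univ : Finset (Fin q)).filter fun x : Fin q => c (i, x) = b).card ≤ Δ - 1
          have := h1 b; omega)
      simpa [smul_eq_mul] using this
    have hcu : (univ : Finset (Fin q)).card = q := by simp
    have hmul : ((univ : Finset (Fin q)).image fun x => c (i, x)).card * (Δ - 1)
        ≤ β * (Δ - 1) := Nat.mul_le_mul_right _ (by omega)
    omega
  -- Claim 1: fewer than σ.card classes have a monochromatic Δ-set
  have claim1 : ((univ : Finset (Fin n)).filter fun i =>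
      ∃ col, Δ ≤ ((univ : Finset (Fin q)).filter fun x => c (i, x) = col).card).card
        < σ.card := by
    by_contra hge
    push_neg at hge
    obtain ⟨G', hG'sub, hG'card⟩ := Finset.exists_subset_card_eq hge
    have hlen : L.length = G'.card := by rw [hG'card, hLlen]
    let g : Fin L.length → Fin n := fun j => (G'.equivFin.symm (Fin.cast hlen j) : _)
    have hginj : Function.Injective g := by
      intro a b hab
      have := G'.equivFin.symm.injective (Subtype.val_injective hab)
      simpa [Fin.ext_iff] using this
    have hgood : ∀ j, ∃ col,
        Δ ≤ ((univ : Finset (Fin q)).filter fun x => c (g j, x) = col).card := by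
      intro j
      have hmem : g j ∈ G' := (G'.equivFin.symm (Fin.cast hlen j)).2
      have := hG'sub hmem
      exact (Finset.mem_filter.mp this).2
    have hTex : ∀ j : Fin L.length, ∃ (T : Finset (Fin q)) (col : ℕ),
        T.card = L.get j ∧ ∀ x ∈ T, c (g j, x) = col := by
      intro j
      obtain ⟨col, hcol⟩ := hgood j
      obtain ⟨T, hTsub, hTcard⟩ := Finset.exists_subset_card_eq (le_trans (hLΔ j) hcol)
      exact ⟨T, col, hTcard, fun x hx => (Finset.mem_filter.mp (hTsub hx)).2⟩
    choose T col hTcard hTcol using hTex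
    set K : Finset (Fin n × Fin q) :=
      univ.biUnion fun j => (T j).image fun x => (g j, x) with hK
    have hinj2 : ∀ j : Fin L.length,
        Function.Injective (fun x : Fin q => ((g j, x) : Fin n × Fin q)) := by
      intro j x y hxy; simpa using congrArg Prod.snd hxy
    have hedge : sigmaEdge n q σ K := by
      apply sigmaEdge_of_cards σ K L hLs hLpos g hginj
      · intro j
        rw [hK, filter_biUnion_eq g hginj T j, Finset.card_image_of_injective _ (hinj2 j),
          hTcard]
      · intro i hi
        rw [hK, filter_biUnion_empty g T i hi]
        rfl
    have h1 := (hc K hedge).1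
    have h2 : (K.image c) ⊆ univ.image col := by
      intro x hx
      obtain ⟨v, hv, rfl⟩ := Finset.mem_image.mp hx
      rw [hK] at hv
      obtain ⟨j, -, hvj⟩ := Finset.mem_biUnion.mp hv
      obtain ⟨y, hy, rfl⟩ := Finset.mem_image.mp hvj
      exact Finset.mem_image.mpr ⟨j, mem_univ j, (hTcol j y hy).symm⟩
    have h3 := Finset.card_le_card h2
    have h4 : (univ.image col).card ≤ L.length :=
      le_trans Finset.card_image_le (by simp)
    omega
  -- there are at least σ.card "bad" classes, each with ≥ β+1 colours
  have hsplit := Finset.card_filter_add_card_filter_not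
    (s := (univ : Finset (Fin n))) (p := fun i =>
      ∃ col, Δ ≤ ((univ : Finset (Fin q)).filter fun x => c (i, x) = col).card)
  have hncard : (univ : Finset (Fin n)).card = n := by simp
  have hbadcard : σ.card ≤ ((univ : Finset (Fin n)).filter fun i =>
      ¬ ∃ col, Δ ≤ ((univ : Finset (Fin q)).filter fun x => c (i, x) = col).card).card := by
    omega
  obtain ⟨B', hB'sub, hB'card⟩ := Finset.exists_subset_card_eq hbadcard
  have hlen : L.length = B'.card := by rw [hB'card, hLlen]
  let g : Fin L.length → Fin n := fun j => (B'.equivFin.symm (Fin.cast hlen j) : _)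
  have hginj : Function.Injective g := by
    intro a b hab
    have := B'.equivFin.symm.injective (Subtype.val_injective hab)
    simpa [Fin.ext_iff] using this
  have hgbad : ∀ j, β + 1 ≤ ((univ : Finset (Fin q)).image fun x => c (g j, x)).card := by
    intro j
    have hmem : g j ∈ B' := (B'.equivFin.symm (Fin.cast hlen j)).2
    have hb := (Finset.mem_filter.mp (hB'sub hmem)).2
    rcases claim2 (g j) with h | h
    · exact absurd h hb
    · exact h
  set P : List (Fin n × ℕ) := List.ofFn (fun j : Fin L.length => (g j, L.get j)) with hP
  have hPfst : P.map Prod.fst = List.ofFn g := by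
    rw [hP, List.map_ofFn]; rfl
  have hPnd : (P.map Prod.fst).Nodup := by
    rw [hPfst]
    exact (List.nodup_ofFn).mpr hginj
  have hPcol : ∀ p ∈ P, β + 1 ≤ ((univ : Finset (Fin q)).image fun x => c (p.1, x)).card := by
    intro p hp
    obtain ⟨j, hj⟩ := List.mem_ofFn.mp hp
    rw [← hj]
    exact hgbad j
  have hPq : ∀ p ∈ P, p.2 ≤ q := by
    intro p hp
    obtain ⟨j, hj⟩ := List.mem_ofFn.mp hp
    rw [← hj]
    exact le_trans (hLΔ j) hqΔ
  obtain ⟨K, hsupp, hcards, hcolbd⟩ := greedy c P hPnd hPcol hPq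
  have hPsnd : (P.map Prod.snd).sum = r := by
    rw [hP, List.map_ofFn]
    have : (Prod.snd ∘ fun j : Fin L.length => (g j, L.get j)) = L.get := rfl
    rw [this, List.ofFn_get]
    have : L.sum = σ.sum := by rw [← hLs]; rfl
    rw [this, hsum]
  have hedge : sigmaEdge n q σ K := by
    apply sigmaEdge_of_cards σ K L hLs hLpos g hginj
    · intro j
      apply hcards
      rw [hP]
      exact List.mem_ofFn.mpr ⟨j, rfl⟩
    · intro i hi
      rw [Finset.card_eq_zero, Finset.filter_eq_empty_iff]
      intro v hv hvi
      have := hsupp v hv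
      rw [hPfst] at this
      obtain ⟨j, hj⟩ := List.mem_ofFn.mp this
      exact hi j (by rw [hj, hvi])
  have h2 := (hc K hedge).2
  rw [hPsnd] at hcolbd
  have : min (β + 1) r = β + 1 := min_eq_left (by omega)
  omega
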